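/- Submodularity for mixed-separations: let (A,B) and (C,D) be mixed-separations of a graph G. Define the corner-separator L(A,C) as the union of the two links adjacent to the corner (A\B)∩(C\D) together with the centre minus those diagonal edges without an endvertex in that corner, and similarly L(B,D). Then |L(A,C)| + |L(B,D)| ≤ |S(A,B)| + |S(C,D)|. Moreover, if equality holds then there are no jumping edges and every diagonal edge has its endvertices in the corners for {A,C} and {B,D}. -/
import Mathlib


namespace Paper

open SimpleGraph

variable {V : Type*} [Fintype V] [DecidableEq V]

/-- A graph is `k`-connected if it has more than `k` vertices and deleting
fewer than `k` vertices never disconnects it. -/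
def KConnected {W : Type*} (k : ℕ) (H : SimpleGraph W) : Prop :=
  k < Nat.card W ∧ ∀ S : Set W, S.ncard < k → (H.induce Sᶜ).Connected

/-- A mixed-separation of `G`: `A ∪ B = V(G)` and both `A \ B` and `B \ A` are nonempty. -/
def MixedSep (G : SimpleGraph V) (A B : Set V) : Prop :=
  A ∪ B = Set.univ ∧ (A \ B).Nonempty ∧ (B \ A).Nonempty

/-- The edges of the separator of `(A,B)`: the edges between `A \ B` and `B \ A`. -/
def sepEdges (G : SimpleGraph V) (A B : Set V) : Set (Sym2 V) :=
  {e | e ∈ G.edgeSet ∧ ∃ x ∈ A \ B, ∃ y ∈ B \ A, e = s(x, y)}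

/-- The separator of `(A,B)`: the vertices of `A ∩ B` together with the
edges between `A \ B` and `B \ A`, viewed as a set in `V ⊕ Sym2 V`. -/
def sepSet (G : SimpleGraph V) (A B : Set V) : Set (V ⊕ Sym2 V) :=
  (Sum.inl '' (A ∩ B)) ∪ (Sum.inr '' sepEdges G A B)

/-- The order of a mixed-separation: the size of its separator. -/
noncomputable def sepOrder (G : SimpleGraph V) (A B : Set V) : ℕ :=
  (sepSet G A B).ncard

/-- A mixed `k`-separation. -/
def MixedKSep (G : SimpleGraph V) (k : ℕ) (A B : Set V) : Prop :=
  MixedSep G A B ∧ sepOrder G A B = k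

/-- A tri-separation: a mixed 3-separation such that every vertex of `A ∩ B`
has at least two neighbours in both `G[A]` and `G[B]`. -/
def TriSep (G : SimpleGraph V) (A B : Set V) : Prop :=
  MixedKSep G 3 A B ∧
    ∀ v ∈ A ∩ B, 2 ≤ (G.neighborSet v ∩ A).ncard ∧ 2 ≤ (G.neighborSet v ∩ B).ncard

/-- Two mixed-separations are nested if, after possibly swapping the names of
the sides of either one, `A ⊆ C` and `B ⊇ D`. -/
def Nested (A B C D : Set V) : Prop :=
  (A ⊆ C ∧ D ⊆ B) ∨ (A ⊆ D ∧ C ⊆ B) ∨ (B ⊆ C ∧ D ⊆ A) ∨ (B ⊆ D ∧ C ⊆ A)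

/-- The induced subgraph `G[A]` contains a cycle. -/
def HasCycleIn (G : SimpleGraph V) (A : Set V) : Prop :=
  ∃ (u : V) (p : G.Walk u u), p.IsCycle ∧ ∀ x ∈ p.support, x ∈ A

/-- A mixed 3-separation is nontrivial if both sides induce a subgraph containing a cycle. -/
def NontrivialSep (G : SimpleGraph V) (A B : Set V) : Prop :=
  HasCycleIn G A ∧ HasCycleIn G B

/-- A mixed-separation is strong if every vertex in its separator has degree at least 4. -/
def StrongSep (G : SimpleGraph V) (A B : Set V) : Prop :=
  ∀ v ∈ A ∩ B, 4 ≤ (G.neighborSet v).ncard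

/-- A tri-separation is totally nested if it is nested with every tri-separation of `G`. -/
def TotallyNested (G : SimpleGraph V) (A B : Set V) : Prop :=
  ∀ C D : Set V, TriSep G C D → Nested A B C D

/-- A trivial tri-separation: its sides are the sides `{v}` and `V \ {v}` of an
atomic cut at a degree-3 vertex `v`. -/
def TrivialSep (G : SimpleGraph V) (A B : Set V) : Prop :=
  ∃ v : V, (G.neighborSet v).ncard = 3 ∧
    ((A = {v} ∧ B = {v}ᶜ) ∨ (B = {v} ∧ A = {v}ᶜ))

/-- Diagonal edges of the crossing-diagram of `(A,B)` and `(C,D)`: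
edges whose endvertices lie in opposite corners. -/
def diagEdges (G : SimpleGraph V) (A B C D : Set V) : Set (Sym2 V) :=
  {e | e ∈ G.edgeSet ∧ ∃ x y, e = s(x, y) ∧
    ((x ∈ (A \ B) ∩ (C \ D) ∧ y ∈ (B \ A) ∩ (D \ C)) ∨
     (x ∈ (A \ B) ∩ (D \ C) ∧ y ∈ (B \ A) ∩ (C \ D)))}

/-- The centre of the crossing-diagram: `A ∩ B ∩ C ∩ D` together with the diagonal edges. -/
def centre (G : SimpleGraph V) (A B C D : Set V) : Set (V ⊕ Sym2 V) :=
  (Sum.inl '' (A ∩ B ∩ C ∩ D)) ∪ (Sum.inr '' diagEdges G A B C D)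

/-- The link for the side `C` in the crossing-diagram of `(A,B)` and `(C,D)`:
the vertices `(A ∩ B) \ D` together with the non-diagonal edges of the separator
of `(A,B)` having an endvertex in a corner for `C`. -/
def link (G : SimpleGraph V) (A B C D : Set V) : Set (V ⊕ Sym2 V) :=
  (Sum.inl '' ((A ∩ B) \ D)) ∪
    (Sum.inr '' {e | e ∈ sepEdges G A B ∧ e ∉ diagEdges G A B C D ∧ ∃ x ∈ e, x ∈ C \ D})

/-- The corner-separator at the corner for `{A,C}`: the union of the links for `A`
and for `C` together with the centre, minus the diagonal edges without an
endvertex in the corner for `{A,C}`. -/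
def cornerSep (G : SimpleGraph V) (A B C D : Set V) : Set (V ⊕ Sym2 V) :=
  link G C D A B ∪ link G A B C D ∪ (Sum.inl '' (A ∩ B ∩ C ∩ D)) ∪
    (Sum.inr '' {e | e ∈ diagEdges G A B C D ∧ ∃ x ∈ e, x ∈ (A \ B) ∩ (C \ D)})

/-- Jumping edges: edges joining vertices of two opposite links. -/
def jumpEdges (G : SimpleGraph V) (A B C D : Set V) : Set (Sym2 V) :=
  {e | e ∈ G.edgeSet ∧ ∃ x y, e = s(x, y) ∧
    ((x ∈ (A ∩ B) \ D ∧ y ∈ (A ∩ B) \ C) ∨ (x ∈ (C ∩ D) \ B ∧ y ∈ (C ∩ D) \ A))}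

/-- A 2-separation: a separation of order two with no edges in its separator. -/
def TwoSep (G : SimpleGraph V) (A B : Set V) : Prop :=
  A ∪ B = Set.univ ∧ (A \ B).Nonempty ∧ (B \ A).Nonempty ∧
    (A ∩ B).ncard = 2 ∧ sepEdges G A B = ∅

/-- `K` is (the vertex set of) a connected component of `G - S`. -/
def IsCompOf (G : SimpleGraph V) (S K : Set V) : Prop :=
  ∃ c : (G.induce Sᶜ).ConnectedComponent, K = Subtype.val '' c.supp
section Helpers

variable (G : SimpleGraph V) (A B C D : Set V)

lemma sepEdges_comm : sepEdges G B A = sepEdges G A B := by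
  ext e
  simp only [sepEdges, Set.mem_setOf_eq]
  constructor <;> rintro ⟨he, x, hx, y, hy, rfl⟩ <;>
    exact ⟨he, y, hy, x, hx, Sym2.eq_swap⟩

lemma diagEdges_comm : diagEdges G C D A B = diagEdges G A B C D := by
  ext e
  simp only [diagEdges, Set.mem_setOf_eq]
  constructor <;> rintro ⟨he, x, y, rfl, ⟨hx, hy⟩ | ⟨hx, hy⟩⟩
  · exact ⟨he, x, y, rfl, Or.inl ⟨⟨hx.2, hx.1⟩, ⟨hy.2, hy.1⟩⟩⟩
  · exact ⟨he, y, x, Sym2.eq_swap.symm, Or.inr ⟨⟨hy.2, hy.1⟩, ⟨hx.2, hx.1⟩⟩⟩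
  · exact ⟨he, x, y, rfl, Or.inl ⟨⟨hx.2, hx.1⟩, ⟨hy.2, hy.1⟩⟩⟩
  · exact ⟨he, y, x, Sym2.eq_swap.symm, Or.inr ⟨⟨hy.2, hy.1⟩, ⟨hx.2, hx.1⟩⟩⟩

lemma diagEdges_swap : diagEdges G B A D C = diagEdges G A B C D := by
  ext e
  simp only [diagEdges, Set.mem_setOf_eq]
  constructor <;> rintro ⟨he, x, y, rfl, ⟨hx, hy⟩ | ⟨hx, hy⟩⟩
  · exact ⟨he, y, x, Sym2.eq_swap.symm, Or.inl ⟨hy, hx⟩⟩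
  · exact ⟨he, y, x, Sym2.eq_swap.symm, Or.inr ⟨hy, hx⟩⟩
  · exact ⟨he, y, x, Sym2.eq_swap.symm, Or.inl ⟨hy, hx⟩⟩
  · exact ⟨he, y, x, Sym2.eq_swap.symm, Or.inr ⟨hy, hx⟩⟩

lemma diag_subset_sepAB : diagEdges G A B C D ⊆ sepEdges G A B := by
  rintro e ⟨he, x, y, rfl, ⟨hx, hy⟩ | ⟨hx, hy⟩⟩ <;>
    exact ⟨he, x, hx.1, y, hy.1, rfl⟩

lemma diag_subset_sepCD : diagEdges G A B C D ⊆ sepEdges G C D := by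
  rintro e ⟨he, x, y, rfl, ⟨hx, hy⟩ | ⟨hx, hy⟩⟩
  · exact ⟨he, x, hx.2, y, hy.2, rfl⟩
  · exact ⟨he, y, hy.2, x, hx.2, Sym2.eq_swap⟩

lemma sep_of_two_endpoints {e : Sym2 V} (he : e ∈ G.edgeSet)
    (h1 : ∃ x ∈ e, x ∈ A \ B) (h2 : ∃ y ∈ e, y ∈ B \ A) :
    e ∈ sepEdges G A B := by
  induction e with
  | _ u v =>
    obtain ⟨x, hxe, hx⟩ := h1
    obtain ⟨y, hye, hy⟩ := h2
    rw [Sym2.mem_iff] at hxe hye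
    rcases hxe with rfl | rfl <;> rcases hye with rfl | rfl
    · exact absurd hx.1 hy.2
    · exact ⟨he, x, hx, y, hy, rfl⟩
    · exact ⟨he, x, hx, y, hy, Sym2.eq_swap⟩
    · exact absurd hx.1 hy.2

lemma mem_sepSet_inl {v : V} (hv : v ∈ A ∩ B) : Sum.inl v ∈ sepSet G A B :=
  Or.inl ⟨v, hv, rfl⟩

lemma mem_sepSet_inr {e : Sym2 V} (he : e ∈ sepEdges G A B) :
    Sum.inr e ∈ sepSet G A B :=
  Or.inr ⟨e, he, rfl⟩

end Helpers

section Helpers2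

variable (G : SimpleGraph V) (A B C D : Set V)

lemma sepSet_comm : sepSet G B A = sepSet G A B := by
  rw [sepSet, sepSet, Set.inter_comm, sepEdges_comm]

lemma inl_mem_cornerSep_iff {v : V} :
    Sum.inl (β := Sym2 V) v ∈ cornerSep G A B C D ↔
      v ∈ (C ∩ D) \ B ∨ v ∈ (A ∩ B) \ D ∨ v ∈ A ∩ B ∩ C ∩ D := by
  constructor
  · rintro ((((⟨w, hw, hwe⟩ | ⟨e, _, hwe⟩) | (⟨w, hw, hwe⟩ | ⟨e, _, hwe⟩)) |
      ⟨w, hw, hwe⟩) | ⟨e, _, hwe⟩) <;>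
      first
        | (obtain rfl := Sum.inl.inj hwe; tauto)
        | (exact absurd hwe (by simp))
  · rintro (h | h | h)
    · exact Or.inl (Or.inl (Or.inl (Or.inl ⟨v, h, rfl⟩)))
    · exact Or.inl (Or.inl (Or.inr (Or.inl ⟨v, h, rfl⟩)))
    · exact Or.inl (Or.inr ⟨v, h, rfl⟩)

lemma inr_mem_cornerSep_iff {e : Sym2 V} :
    Sum.inr (α := V) e ∈ cornerSep G A B C D ↔
      (e ∈ sepEdges G C D ∧ e ∉ diagEdges G C D A B ∧ ∃ x ∈ e, x ∈ A \ B) ∨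
      (e ∈ sepEdges G A B ∧ e ∉ diagEdges G A B C D ∧ ∃ x ∈ e, x ∈ C \ D) ∨
      (e ∈ diagEdges G A B C D ∧ ∃ x ∈ e, x ∈ (A \ B) ∩ (C \ D)) := by
  constructor
  · rintro ((((⟨w, _, hwe⟩ | ⟨f, hf, hwe⟩) | (⟨w, _, hwe⟩ | ⟨f, hf, hwe⟩)) |
      ⟨w, _, hwe⟩) | ⟨f, hf, hwe⟩) <;>
      first
        | (obtain rfl := Sum.inr.inj hwe;
            first | exact Or.inl hf | exact Or.inr (Or.inl hf) | exact Or.inr (Or.inr hf))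
        | (exact absurd hwe (by simp))
  · rintro (h | h | h)
    · exact Or.inl (Or.inl (Or.inl (Or.inr ⟨e, h, rfl⟩)))
    · exact Or.inl (Or.inl (Or.inr (Or.inr ⟨e, h, rfl⟩)))
    · exact Or.inr ⟨e, h, rfl⟩

end Helpers2

section Helpers3

variable (G : SimpleGraph V) (A B C D : Set V)

lemma not_in_sep_of_both {x y : V} (hx : x ∈ A) (hx' : x ∈ B) (hy : y ∈ A) (hy' : y ∈ B) :
    s(x, y) ∉ sepEdges G A B := by
  rintro ⟨-, u, hu, v, hv, heq⟩
  rw [Sym2.eq_iff] at heq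
  rcases heq with ⟨rfl, rfl⟩ | ⟨rfl, rfl⟩
  · exact hu.2 hx'
  · exact hv.2 hx

lemma not_in_diag_left {x y : V} (hx : x ∈ A) (hx' : x ∈ B) :
    s(x, y) ∉ diagEdges G A B C D := by
  rintro ⟨-, u, v, heq, ⟨hu, hv⟩ | ⟨hu, hv⟩⟩ <;> rw [Sym2.eq_iff] at heq <;>
    rcases heq with ⟨rfl, rfl⟩ | ⟨rfl, rfl⟩
  · exact hu.1.2 hx'
  · exact hv.1.2 hx
  · exact hu.1.2 hx'
  · exact hv.1.2 hx

lemma inr_mem_cornerSep2_iff {e : Sym2 V} :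
    Sum.inr (α := V) e ∈ cornerSep G B A D C ↔
      (e ∈ sepEdges G C D ∧ e ∉ diagEdges G A B C D ∧ ∃ x ∈ e, x ∈ B \ A) ∨
      (e ∈ sepEdges G A B ∧ e ∉ diagEdges G A B C D ∧ ∃ x ∈ e, x ∈ D \ C) ∨
      (e ∈ diagEdges G A B C D ∧ ∃ x ∈ e, x ∈ (B \ A) ∩ (D \ C)) := by
  rw [inr_mem_cornerSep_iff, sepEdges_comm G C D, sepEdges_comm G A B,
    ← diagEdges_swap G D C B A, diagEdges_comm G A B C D, diagEdges_swap G A B C D]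

lemma cornerSep_subset_union :
    cornerSep G A B C D ⊆ sepSet G A B ∪ sepSet G C D := by
  rintro (v | e) h
  · rw [inl_mem_cornerSep_iff] at h
    rcases h with h | h | h
    · exact Or.inr (mem_sepSet_inl G C D h.1)
    · exact Or.inl (mem_sepSet_inl G A B h.1)
    · exact Or.inl (mem_sepSet_inl G A B h.1.1)
  · rw [inr_mem_cornerSep_iff] at h
    rcases h with ⟨h, -, -⟩ | ⟨h, -, -⟩ | ⟨h, -⟩
    · exact Or.inr (mem_sepSet_inr G C D h)
    · exact Or.inl (mem_sepSet_inr G A B h)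
    · exact Or.inl (mem_sepSet_inr G A B (diag_subset_sepAB G A B C D h))

lemma cornerSep_inter_subset (hUAB : A ∪ B = Set.univ) (hUCD : C ∪ D = Set.univ) :
    cornerSep G A B C D ∩ cornerSep G B A D C ⊆ sepSet G A B ∩ sepSet G C D := by
  rintro (v | e) ⟨h1, h2⟩
  · rw [inl_mem_cornerSep_iff] at h1 h2
    have hABv : v ∈ A ∪ B := hUAB.symm ▸ Set.mem_univ v
    have hCDv : v ∈ C ∪ D := hUCD.symm ▸ Set.mem_univ v
    have hv : v ∈ A ∩ B ∩ C ∩ D := by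
      simp only [Set.mem_inter_iff, Set.mem_diff, Set.mem_union] at h1 h2 hABv hCDv ⊢
      tauto
    exact ⟨mem_sepSet_inl G A B hv.1.1, mem_sepSet_inl G C D ⟨hv.1.2, hv.2⟩⟩
  · rw [inr_mem_cornerSep_iff, diagEdges_comm] at h1
    rw [inr_mem_cornerSep2_iff] at h2
    have key : e ∈ sepEdges G A B ∧ e ∈ sepEdges G C D := by
      rcases h1 with ⟨hcd, -, hx⟩ | ⟨hab, -, hx⟩ | ⟨hd, -⟩
      · rcases h2 with ⟨-, -, hy⟩ | ⟨hab, -, -⟩ | ⟨hd, -⟩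
        · exact ⟨sep_of_two_endpoints G A B hcd.1 hx hy, hcd⟩
        · exact ⟨hab, hcd⟩
        · exact ⟨diag_subset_sepAB G A B C D hd, hcd⟩
      · rcases h2 with ⟨hcd, -, -⟩ | ⟨-, -, hy⟩ | ⟨hd, -⟩
        · exact ⟨hab, hcd⟩
        · exact ⟨hab, sep_of_two_endpoints G C D hab.1 hx hy⟩
        · exact ⟨hab, diag_subset_sepCD G A B C D hd⟩
      · exact ⟨diag_subset_sepAB G A B C D hd, diag_subset_sepCD G A B C D hd⟩
    exact ⟨mem_sepSet_inr G A B key.1, mem_sepSet_inr G C D key.2⟩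

end Helpers3

/-- Submodularity for mixed-separations, with the structure of
the equality case. -/
theorem stmt4 (G : SimpleGraph V) (A B C D : Set V)
    (hAB : MixedSep G A B) (hCD : MixedSep G C D) :
    (cornerSep G A B C D).ncard + (cornerSep G B A D C).ncard ≤
        sepOrder G A B + sepOrder G C D ∧
      ((cornerSep G A B C D).ncard + (cornerSep G B A D C).ncard =
          sepOrder G A B + sepOrder G C D →
        jumpEdges G A B C D = ∅ ∧
          ∀ e ∈ diagEdges G A B C D, ∃ x y : V, e = s(x, y) ∧
            x ∈ (A \ B) ∩ (C \ D) ∧ y ∈ (B \ A) ∩ (D \ C)) := by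
  obtain ⟨hUAB, -, -⟩ := hAB
  obtain ⟨hUCD, -, -⟩ := hCD
  have hsub1 : cornerSep G A B C D ⊆ sepSet G A B ∪ sepSet G C D :=
    cornerSep_subset_union G A B C D
  have hsub2 : cornerSep G B A D C ⊆ sepSet G A B ∪ sepSet G C D := by
    have h := cornerSep_subset_union G B A D C
    rwa [sepSet_comm G A B, sepSet_comm G C D] at h
  have hsubU : cornerSep G A B C D ∪ cornerSep G B A D C ⊆
      sepSet G A B ∪ sepSet G C D := Set.union_subset hsub1 hsub2
  have hsubI : cornerSep G A B C D ∩ cornerSep G B A D C ⊆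
      sepSet G A B ∩ sepSet G C D := cornerSep_inter_subset G A B C D hUAB hUCD
  have hle1 : (cornerSep G A B C D ∪ cornerSep G B A D C).ncard ≤
      (sepSet G A B ∪ sepSet G C D).ncard := Set.ncard_le_ncard hsubU (Set.toFinite _)
  have hle2 : (cornerSep G A B C D ∩ cornerSep G B A D C).ncard ≤
      (sepSet G A B ∩ sepSet G C D).ncard := Set.ncard_le_ncard hsubI (Set.toFinite _)
  have e1 : (cornerSep G A B C D ∪ cornerSep G B A D C).ncard +
      (cornerSep G A B C D ∩ cornerSep G B A D C).ncard =
      (cornerSep G A B C D).ncard + (cornerSep G B A D C).ncard :=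
    Set.ncard_union_add_ncard_inter _ _ (Set.toFinite _) (Set.toFinite _)
  have e2 : (sepSet G A B ∪ sepSet G C D).ncard +
      (sepSet G A B ∩ sepSet G C D).ncard =
      (sepSet G A B).ncard + (sepSet G C D).ncard :=
    Set.ncard_union_add_ncard_inter _ _ (Set.toFinite _) (Set.toFinite _)
  constructor
  · simp only [sepOrder]; omega
  · intro heq
    simp only [sepOrder] at heq
    have hEqU : cornerSep G A B C D ∪ cornerSep G B A D C =
        sepSet G A B ∪ sepSet G C D :=
      Set.eq_of_subset_of_ncard_le hsubU (by omega) (Set.toFinite _)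
    have hEqI : cornerSep G A B C D ∩ cornerSep G B A D C =
        sepSet G A B ∩ sepSet G C D :=
      Set.eq_of_subset_of_ncard_le hsubI (by omega) (Set.toFinite _)
    have hAB' : ∀ z : V, z ∈ A ∪ B := fun z => hUAB.symm ▸ Set.mem_univ z
    have hCD' : ∀ z : V, z ∈ C ∪ D := fun z => hUCD.symm ▸ Set.mem_univ z
    constructor
    · rw [Set.eq_empty_iff_forall_notMem]
      rintro e ⟨he, x, y, rfl, ⟨hx, hy⟩ | ⟨hx, hy⟩⟩
      · -- x ∈ (A∩B)\D, y ∈ (A∩B)\C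
        have hxC : x ∈ C \ D := ⟨(hCD' x).resolve_right hx.2, hx.2⟩
        have hyD : y ∈ D \ C := ⟨(hCD' y).resolve_left hy.2, hy.2⟩
        have hsep : s(x, y) ∈ sepEdges G C D := ⟨he, x, hxC, y, hyD, rfl⟩
        have hmem : Sum.inr (α := V) s(x, y) ∈
            cornerSep G A B C D ∪ cornerSep G B A D C := by
          rw [hEqU]; exact Or.inr (mem_sepSet_inr G C D hsep)
        have hnd : s(x, y) ∉ diagEdges G A B C D :=
          not_in_diag_left G A B C D hx.1.1 hx.1.2
        have hns : s(x, y) ∉ sepEdges G A B :=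
          not_in_sep_of_both G A B hx.1.1 hx.1.2 hy.1.1 hy.1.2
        rcases hmem with h | h
        · rw [inr_mem_cornerSep_iff, diagEdges_comm] at h
          rcases h with ⟨-, -, z, hz, hzc⟩ | ⟨hs, -, -⟩ | ⟨hd, -⟩
          · rw [Sym2.mem_iff] at hz
            rcases hz with rfl | rfl
            · exact hzc.2 hx.1.2
            · exact hzc.2 hy.1.2
          · exact hns hs
          · exact hnd hd
        · rw [inr_mem_cornerSep2_iff] at h
          rcases h with ⟨-, -, z, hz, hzc⟩ | ⟨hs, -, -⟩ | ⟨hd, -⟩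
          · rw [Sym2.mem_iff] at hz
            rcases hz with rfl | rfl
            · exact hzc.2 hx.1.1
            · exact hzc.2 hy.1.1
          · exact hns hs
          · exact hnd hd
      · -- x ∈ (C∩D)\B, y ∈ (C∩D)\A
        have hxA : x ∈ A \ B := ⟨(hAB' x).resolve_right hx.2, hx.2⟩
        have hyB : y ∈ B \ A := ⟨(hAB' y).resolve_left hy.2, hy.2⟩
        have hsep : s(x, y) ∈ sepEdges G A B := ⟨he, x, hxA, y, hyB, rfl⟩
        have hmem : Sum.inr (α := V) s(x, y) ∈
            cornerSep G A B C D ∪ cornerSep G B A D C := by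
          rw [hEqU]; exact Or.inl (mem_sepSet_inr G A B hsep)
        have hnd : s(x, y) ∉ diagEdges G A B C D := by
          rw [← diagEdges_comm]; exact not_in_diag_left G C D A B hx.1.1 hx.1.2
        have hns : s(x, y) ∉ sepEdges G C D :=
          not_in_sep_of_both G C D hx.1.1 hx.1.2 hy.1.1 hy.1.2
        rcases hmem with h | h
        · rw [inr_mem_cornerSep_iff, diagEdges_comm] at h
          rcases h with ⟨hs, -, -⟩ | ⟨-, -, z, hz, hzc⟩ | ⟨hd, -⟩
          · exact hns hs
          · rw [Sym2.mem_iff] at hz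
            rcases hz with rfl | rfl
            · exact hzc.2 hx.1.2
            · exact hzc.2 hy.1.2
          · exact hnd hd
        · rw [inr_mem_cornerSep2_iff] at h
          rcases h with ⟨hs, -, -⟩ | ⟨-, -, z, hz, hzc⟩ | ⟨hd, -⟩
          · exact hns hs
          · rw [Sym2.mem_iff] at hz
            rcases hz with rfl | rfl
            · exact hzc.2 hx.1.1
            · exact hzc.2 hy.1.1
          · exact hnd hd
    · rintro e ⟨he, x, y, rfl, ⟨hx, hy⟩ | ⟨hx, hy⟩⟩
      · exact ⟨x, y, rfl, hx, hy⟩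
      · exfalso
        have hd : s(x, y) ∈ diagEdges G A B C D := ⟨he, x, y, rfl, Or.inr ⟨hx, hy⟩⟩
        have hmem : Sum.inr (α := V) s(x, y) ∈
            cornerSep G A B C D ∩ cornerSep G B A D C := by
          rw [hEqI]
          exact ⟨mem_sepSet_inr G A B (diag_subset_sepAB G A B C D hd),
            mem_sepSet_inr G C D (diag_subset_sepCD G A B C D hd)⟩
        have h1 := hmem.1
        rw [inr_mem_cornerSep_iff, diagEdges_comm] at h1
        rcases h1 with ⟨-, hnd, -⟩ | ⟨-, hnd, -⟩ | ⟨-, z, hz, hzc⟩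
        · exact hnd hd
        · exact hnd hd
        · rw [Sym2.mem_iff] at hz
          rcases hz with rfl | rfl
          · exact hx.2.2 hzc.2.1
          · exact hy.1.2 hzc.1.1

end Paper
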